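/- arXiv:2205.03638 — 4 statements merged into one kernel-verified Lean document; each statement's English description precedes it below -/
import Mathlib

section
/- There exist a constant C > 0 and an integer K ≥ 1 such that for all k ∈ ℤ with |k| ≥ K: |λ_k^+ + k² − i k| ≤ C/|k| and |λ_k^- + k⁴ + i k³ − k²| ≤ C/|k|. (Asymptotic expressions of the two parabolic branches of eigenvalues of the adjoint operator: λ_k^+ = −k² + ik + O(|k|^{-1}) and λ_k^- = −k⁴ − ik³ + k² + O(|k|^{-1}) as |k| → ∞.) -/
open Complex MeasureTheory Real Set

noncomputable section

/-- `c_k = k⁴ + i k³ − i k`. -/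
def cc (k : ℤ) : ℂ := (k:ℂ)^4 + Complex.I * (k:ℂ)^3 - Complex.I * (k:ℂ)

/-- `d_k = k⁶ + i k³ + k²`. -/
def dd (k : ℤ) : ℂ := (k:ℂ)^6 + Complex.I * (k:ℂ)^3 + (k:ℂ)^2

/-- `λ_k^+`, using the principal branch of the complex square root (`cpow (1/2)`). -/
def lamP (k : ℤ) : ℂ := (-cc k + (cc k ^ 2 - 4 * dd k) ^ ((1:ℂ)/2)) / 2

/-- `λ_k^-`. -/
def lamM (k : ℤ) : ℂ := (-cc k - (cc k ^ 2 - 4 * dd k) ^ ((1:ℂ)/2)) / 2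

/-- `η_k^+ = −i k⁵ − (1 + λ_k^+) i k + k² − λ_k^+`. -/
def etaP (k : ℤ) : ℂ := -Complex.I * (k:ℂ)^5 - (1 + lamP k) * Complex.I * (k:ℂ) + (k:ℂ)^2 - lamP k

/-- `η_k^-`. -/
def etaM (k : ℤ) : ℂ := -Complex.I * (k:ℂ)^5 - (1 + lamM k) * Complex.I * (k:ℂ) + (k:ℂ)^2 - lamM k

/-- `θ_k^+ = η_k^+ / λ_k^+`. -/
def thetaP (k : ℤ) : ℂ := etaP k / lamP k

/-- `θ_k^- = η_k^- / λ_k^-`. -/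
def thetaM (k : ℤ) : ℂ := etaM k / lamM k

lemma re_cpow_half_nonneg (z : ℂ) : 0 ≤ (z ^ ((1:ℂ)/2)).re := by
  by_cases hz : z = 0
  · simp [hz, Complex.zero_cpow (by norm_num : ((1:ℂ)/2) ≠ 0)]
  · rw [Complex.cpow_def_of_ne_zero hz, Complex.exp_re]
    have him : (Complex.log z * ((1:ℂ)/2)).im = z.arg / 2 := by
      simp [Complex.mul_im, Complex.log_im]
      ring
    rw [him]
    apply mul_nonneg (Real.exp_nonneg _)
    apply Real.cos_nonneg_of_mem_Icc
    constructor
    · have := Complex.neg_pi_lt_arg z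
      linarith
    · have := Complex.arg_le_pi z
      linarith

/-- asymptotics of the two eigenvalue branches. -/
theorem eigenvalue_asymptotics :
    ∃ (C : ℝ) (K : ℕ), 0 < C ∧ 1 ≤ K ∧
      ∀ k : ℤ, (K:ℤ) ≤ |k| →
        ‖lamP k + (k:ℂ)^2 - Complex.I * (k:ℂ)‖ ≤ C / |(k:ℝ)| ∧
        ‖lamM k + (k:ℂ)^4 + Complex.I * (k:ℂ)^3 - (k:ℂ)^2‖ ≤ C / |(k:ℝ)| := by
  refine ⟨4, 2, by norm_num, by norm_num, ?_⟩
  intro k hk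
  have hk2 : (2:ℝ) ≤ |(k:ℝ)| := by
    have : ((2:ℤ):ℝ) ≤ (|k|:ℝ) := by exact_mod_cast hk
    simpa [Int.cast_abs] using this
  set x : ℝ := |(k:ℝ)| with hx
  have hxpos : (0:ℝ) < x := by linarith
  have hxsq : x^2 = ((k:ℝ))^2 := sq_abs _
  set s : ℂ := (cc k ^ 2 - 4 * dd k) ^ ((1:ℂ)/2) with hs
  set a : ℂ := (k:ℂ)^4 + Complex.I * (k:ℂ)^3 - 2*(k:ℂ)^2 + Complex.I * (k:ℂ) with ha
  -- s^2 = D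
  have hs2 : s ^ 2 = cc k ^ 2 - 4 * dd k := by
    by_cases hD : cc k ^ 2 - 4 * dd k = 0
    · rw [hs, hD, Complex.zero_cpow (by norm_num : ((1:ℂ)/2) ≠ 0)]
      ring
    · rw [hs, sq, ← Complex.cpow_add _ _ hD]
      norm_num
  have hI : Complex.I^2 = -1 := Complex.I_sq
  -- D = a^2 - 4k^2
  have hDa : cc k ^ 2 - 4 * dd k = a ^ 2 - 4 * (k:ℂ)^2 := by
    rw [ha]; unfold cc dd
    linear_combination (-4*(k:ℂ)^4) * hI
  have hsa2 : s ^ 2 = a ^ 2 - 4 * (k:ℂ)^2 := by rw [hs2, hDa]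
  have key : (s - a) * (s + a) = -4 * (k:ℂ)^2 := by linear_combination hsa2
  -- real part of a
  have haRe : a.re = (k:ℝ)^4 - 2*(k:ℝ)^2 := by
    simp [ha, Complex.add_re, Complex.sub_re, Complex.mul_re, Complex.I_re,
      Complex.I_im, pow_succ, Complex.mul_im]
  have hx4 : x^4 = (k:ℝ)^4 := by nlinarith [hxsq]
  have hy4 : (4:ℝ) ≤ x^2 := by nlinarith
  have haRe' : x^4/2 ≤ a.re := by
    rw [haRe, ← hx4, ← hxsq]
    nlinarith [hy4, sq_nonneg x]
  have hsre : 0 ≤ s.re := re_cpow_half_nonneg _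
  -- lower bound on norm of s + a
  have hhalf : (0:ℝ) < x^4/2 := by
    have := pow_pos hxpos 4; linarith
  have hlow : x^4/2 ≤ ‖s + a‖ := by
    have h1 : (s + a).re ≤ ‖s + a‖ := Complex.re_le_norm _
    have h2 : (s + a).re = s.re + a.re := Complex.add_re _ _
    linarith
  have h0 : (0:ℝ) < ‖s + a‖ := lt_of_lt_of_le hhalf hlow
  have hnorm : ‖s - a‖ * ‖s + a‖ = 4 * x^2 := by
    rw [← norm_mul, key,
      show (-4 : ℂ) * (k:ℂ)^2 = (((-4) * (k:ℝ)^2 : ℝ) : ℂ) by push_cast; ring,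
      Complex.norm_real, Real.norm_eq_abs, abs_mul, _root_.abs_pow]
    rw [← hx]
    norm_num
  have hbound : ‖s - a‖ ≤ 8 / x^2 := by
    calc ‖s - a‖ = 4 * x^2 / ‖s + a‖ := by
          rw [eq_div_iff (ne_of_gt h0)]; exact hnorm
    _ ≤ 4 * x^2 / (x^4/2) := by
        exact div_le_div_of_nonneg_left (by positivity) hhalf hlow
    _ = 8 / x^2 := by
        rw [div_div_eq_mul_div, div_eq_div_iff (by positivity) (by positivity)]
        ring
  -- identify the two error terms
  have hP : lamP k + (k:ℂ)^2 - Complex.I * (k:ℂ) = (s - a)/2 := by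
    rw [lamP, ← hs, ha]; unfold cc; ring
  have hM : lamM k + (k:ℂ)^4 + Complex.I * (k:ℂ)^3 - (k:ℂ)^2
      = -(lamP k + (k:ℂ)^2 - Complex.I * (k:ℂ)) := by
    rw [lamP, lamM, ← hs]; unfold cc; ring
  have hfinal : ‖lamP k + (k:ℂ)^2 - Complex.I * (k:ℂ)‖ ≤ 4 / x := by
    rw [hP]
    have hd : ‖(s - a)/2‖ = ‖s - a‖/2 := by
      rw [norm_div]; norm_num
    rw [hd]
    have h4 : 4 / x^2 ≤ 4 / x := by
      apply div_le_div_of_nonneg_left (by norm_num) hxpos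
      nlinarith
    calc ‖s - a‖/2 ≤ (8/x^2)/2 := by linarith
    _ = 4/x^2 := by ring
    _ ≤ 4/x := h4
  exact ⟨hfinal, by rw [hM, norm_neg]; exact hfinal⟩
end
end

section
/- All eigenvalues are distinct and nonzero: for every k ∈ ℤ \ {0} and sign s ∈ {+, −}, λ_k^s ≠ 0; and for all k, l ∈ ℤ \ {0} and signs s, s' ∈ {+, −}, if λ_k^s = λ_l^{s'} then k = l and s = s'. -/
open Complex MeasureTheory Real Set

noncomputable section

/-! ### Auxiliary lemmas -/

private lemma ksq_cases (k : ℤ) (hk : k ≠ 0) : k^2 = 1 ∨ 4 ≤ k^2 := by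
  rcases (by omega : k = 1 ∨ k = -1 ∨ 2 ≤ k ∨ k ≤ -2) with h|h|h|h
  · left; subst h; norm_num
  · left; subst h; norm_num
  · right; nlinarith
  · right; nlinarith

private lemma one_le_sq (k : ℤ) (hk : k ≠ 0) : 1 ≤ k^2 := by
  rcases (by omega : 1 ≤ k ∨ k ≤ -1) with h|h <;> nlinarith

/-- the discriminant is nonzero -/
private lemma disc_ne (k : ℤ) (hk : k ≠ 0) : cc k ^ 2 - 4 * dd k ≠ 0 := by
  have hform : cc k ^ 2 - 4 * dd k
      = (((k^8 - 5*k^6 + 2*k^4 - 5*k^2 : ℤ) : ℝ) : ℂ)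
        + (((2*k^7 - 2*k^5 - 4*k^3 : ℤ) : ℝ) : ℂ) * Complex.I := by
    simp only [cc, dd]; push_cast
    linear_combination ((k:ℂ)^6 - 2*(k:ℂ)^4 + (k:ℂ)^2) * Complex.I_sq
  intro h
  rw [hform] at h
  have him : ((2*k^7 - 2*k^5 - 4*k^3 : ℤ) : ℝ) = 0 := by
    simpa only [Complex.add_im, Complex.mul_im, Complex.ofReal_im, Complex.ofReal_re,
      Complex.I_im, Complex.I_re, Complex.zero_im, mul_zero, mul_one, zero_mul,
      add_zero, zero_add] using congrArg Complex.im h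
  have hZ : (2*k^7 - 2*k^5 - 4*k^3 : ℤ) = 0 := by exact_mod_cast him
  have h3 : k^3 ≠ 0 := pow_ne_zero 3 hk
  have hfac : 2*k^3*(k^4 - k^2 - 2) = 0 := by linear_combination hZ
  have h4 : k^4 - k^2 - 2 = 0 := by
    rcases mul_eq_zero.1 hfac with h'|h'
    · exact absurd (by omega : k^3 = 0) h3
    · exact h'
  rcases ksq_cases k hk with hu|hu
  · have : k^4 = 1 := by nlinarith
    omega
  · have : k^4 ≥ 16 := by nlinarith
    nlinarith

private lemma dd_ne (k : ℤ) (hk : k ≠ 0) : dd k ≠ 0 := by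
  have hform : dd k = (((k^6 + k^2 : ℤ) : ℝ) : ℂ) + (((k^3 : ℤ) : ℝ) : ℂ) * Complex.I := by
    simp only [dd]; push_cast; ring
  intro h
  rw [hform] at h
  have him : ((k^3 : ℤ) : ℝ) = 0 := by
    simpa only [Complex.add_im, Complex.mul_im, Complex.ofReal_im, Complex.ofReal_re,
      Complex.I_im, Complex.I_re, Complex.zero_im, mul_zero, mul_one, zero_mul,
      add_zero, zero_add] using congrArg Complex.im h
  have hZ : (k^3 : ℤ) = 0 := by exact_mod_cast him
  exact pow_ne_zero 3 hk hZ

private lemma sqrtD_sq (k : ℤ) (hk : k ≠ 0) :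
    ((cc k ^ 2 - 4 * dd k) ^ ((1:ℂ)/2))^2 = cc k ^ 2 - 4 * dd k := by
  rw [sq, ← Complex.cpow_add _ _ (disc_ne k hk)]
  norm_num

private lemma quadP (k : ℤ) (hk : k ≠ 0) : lamP k ^ 2 + cc k * lamP k + dd k = 0 := by
  have h := sqrtD_sq k hk
  unfold lamP
  linear_combination (1/4 : ℂ) * h

private lemma quadM (k : ℤ) (hk : k ≠ 0) : lamM k ^ 2 + cc k * lamM k + dd k = 0 := by
  have h := sqrtD_sq k hk
  unfold lamM
  linear_combination (1/4 : ℂ) * h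

private lemma prodPM (k : ℤ) (hk : k ≠ 0) : lamP k * lamM k = dd k := by
  have h := sqrtD_sq k hk
  unfold lamP lamM
  linear_combination (-1/4 : ℂ) * h

private lemma lamP_ne_lamM_self (k : ℤ) (hk : k ≠ 0) : lamP k ≠ lamM k := by
  intro h
  have hS : (cc k ^ 2 - 4 * dd k) ^ ((1:ℂ)/2) = 0 := by
    have : lamP k - lamM k = (cc k ^ 2 - 4 * dd k) ^ ((1:ℂ)/2) := by
      unfold lamP lamM; ring
    rw [h, sub_self] at this; exact this.symm
  rw [Complex.cpow_eq_zero_iff] at hS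
  exact disc_ne k hk hS.1

/-! ### Centers -/

private def aC (k : ℤ) : ℂ := -(k:ℂ)^2 + (k:ℂ) * Complex.I
private def bC (k : ℤ) : ℂ := -(k:ℂ)^4 + (k:ℂ)^2 - (k:ℂ)^3 * Complex.I

private lemma root_prod (k : ℤ) (z : ℂ) (hz : z^2 + cc k * z + dd k = 0) :
    (z - aC k) * (z - bC k) = -(k:ℂ)^2 := by
  simp only [aC, bC, cc, dd] at *
  linear_combination hz - (k:ℂ)^4 * Complex.I_sq

/-- lower bound for the distance between the two centers -/
private lemma delta_lb (k : ℤ) (hk : k ≠ 0) :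
    (100*(k:ℝ)^2 + 81)/90 ≤ ‖aC k - bC k‖ := by
  have he : aC k - bC k
      = (((k^4 - 2*k^2 : ℤ) : ℝ) : ℂ) + (((k^3 + k : ℤ) : ℝ) : ℂ) * Complex.I := by
    simp only [aC, bC]; push_cast; ring
  have hsq : (‖aC k - bC k‖)^2
      = ((k^4 - 2*k^2 : ℤ) : ℝ)^2 + ((k^3 + k : ℤ) : ℝ)^2 := by
    rw [Complex.sq_norm, he, Complex.normSq_add_mul_I]
  have hk1 : (1:ℝ) ≤ (k:ℝ)^2 := by
    have : (1:ℤ) ≤ k^2 := by rcases ksq_cases k hk with h|h <;> omega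
    exact_mod_cast this
  have hbig : ((100*(k:ℝ)^2 + 81)/90)^2 ≤ (‖aC k - bC k‖)^2 := by
    rw [hsq]; push_cast
    rcases ksq_cases k hk with h|h
    · have h' : ((k:ℝ))^2 = 1 := by exact_mod_cast h
      nlinarith [sq_nonneg ((k:ℝ)^3 - (k:ℝ)), sq_nonneg ((k:ℝ)^4 - 2*(k:ℝ)^2)]
    · have h' : (4:ℝ) ≤ ((k:ℝ))^2 := by exact_mod_cast h
      nlinarith [sq_nonneg ((k:ℝ)^4 - 2*(k:ℝ)^2), sq_nonneg ((k:ℝ)^3 + (k:ℝ)),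
        sq_nonneg ((k:ℝ)^2 - 4), sq_nonneg (k:ℝ)]
  have habs : (0:ℝ) ≤ ‖aC k - bC k‖ := norm_nonneg _
  nlinarith [hbig, habs, hk1]

/-- every root is within 9/10 of one of the two centers -/
private lemma window (k : ℤ) (hk : k ≠ 0) (z : ℂ) (hz : z^2 + cc k * z + dd k = 0) :
    ‖z - aC k‖ ≤ 9/10 ∨ ‖z - bC k‖ ≤ 9/10 := by
  by_contra hcon
  push_neg at hcon
  obtain ⟨h1, h2⟩ := hcon
  have hprod : ‖z - aC k‖ * ‖z - bC k‖ = (k:ℝ)^2 := by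
    rw [← norm_mul, root_prod k z hz, norm_neg, norm_pow]
    rw [Complex.norm_intCast]
    exact sq_abs _
  have htri : ‖aC k - bC k‖
      ≤ ‖z - aC k‖ + ‖z - bC k‖ := by
    have := norm_sub_le_norm_sub_add_norm_sub (aC k) z (bC k)
    rwa [norm_sub_rev (aC k) z] at this
  have hΔ := delta_lb k hk
  nlinarith [mul_pos (sub_pos.2 h1) (sub_pos.2 h2), hprod, htri, hΔ]

/-! ### Integer distance lemmas for the centers -/

private lemma dist_aa (k l : ℤ) (hk : k ≠ 0) (hl : l ≠ 0) (hne : k ≠ l) :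
    4 ≤ (l^2 - k^2)^2 + (k - l)^2 := by
  rcases (by omega : k = l + 1 ∨ k = l - 1 ∨ 2 ≤ k - l ∨ k - l ≤ -2) with h|h|h|h
  · subst h
    have hl' : l ≥ 1 ∨ l ≤ -2 := by omega
    rcases hl' with h'|h' <;> nlinarith
  · subst h
    have hl' : l ≤ -1 ∨ l ≥ 2 := by omega
    rcases hl' with h'|h' <;> nlinarith
  · nlinarith [sq_nonneg (l^2 - k^2)]
  · nlinarith [sq_nonneg (l^2 - k^2)]

private lemma cubes_far (k l : ℤ) (hk : k ≠ 0) (hl : l ≠ 0) (hne : k ≠ l) :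
    4 ≤ (l^3 - k^3)^2 := by
  have hk2 := one_le_sq k hk
  have hl2 := one_le_sq l hl
  have hm : 1 ≤ k^2 + k*l + l^2 := by nlinarith [sq_nonneg (2*k + l)]
  have hkey : l^3 - k^3 = (l - k) * (k^2 + k*l + l^2) := by ring
  have hlk : 1 ≤ (l - k)^2 := by
    rcases (by omega : 1 ≤ l - k ∨ l - k ≤ -1) with h|h <;> nlinarith
  rcases (by omega : k^2 + k*l + l^2 = 1 ∨ 2 ≤ k^2 + k*l + l^2) with hm1|hm2
  · -- k² + kl + l² = 1 forces {k,l} = {1,-1}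
    have hkl_ge : -1 ≤ k * l := by nlinarith [sq_nonneg (k+l)]
    have hkl_le : k * l ≤ -1 := by linarith
    have hkl : k * l = -1 := le_antisymm hkl_le hkl_ge
    have hsum : k^2 + l^2 = 2 := by linarith [hm1, hkl]
    have hk21 : k^2 = 1 := by linarith
    have hl21 : l^2 = 1 := by linarith
    have hlk4 : (l - k)^2 = 4 := by linear_combination hk21 + hl21 - 2*hkl
    rw [hkey, hm1, mul_one]
    exact hlk4.symm.le
  · rw [hkey]
    nlinarith [hlk, hm2, mul_nonneg (sub_nonneg.2 hlk) (sub_nonneg.2 hm2)]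

private lemma dist_bb (k l : ℤ) (hk : k ≠ 0) (hl : l ≠ 0) (hne : k ≠ l) :
    4 ≤ (l^4 - l^2 - (k^4 - k^2))^2 + (l^3 - k^3)^2 := by
  nlinarith [cubes_far k l hk hl hne, sq_nonneg (l^4 - l^2 - (k^4 - k^2))]

private lemma dist_ab (k l : ℤ) (hk : k ≠ 0) (hl : l ≠ 0)
    (hx1 : ¬(k = -1 ∧ l = 1)) (hx2 : ¬(k = 1 ∧ l = -1)) :
    4 ≤ (l^4 - l^2 - k^2)^2 + (k + l^3)^2 := by
  have hl2 := one_le_sq l hl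
  rcases (by omega : k + l^3 ≥ 2 ∨ k + l^3 ≤ -2 ∨ k + l^3 = 0 ∨ k + l^3 = 1 ∨ k + l^3 = -1)
    with h|h|h|h|h
  · nlinarith [sq_nonneg (l^4 - l^2 - k^2)]
  · nlinarith [sq_nonneg (l^4 - l^2 - k^2)]
  · -- k = -l³
    have hkv : k = -l^3 := by omega
    subst hkv
    rcases ksq_cases l hl with h'|h'
    · have hfac : (l - 1) * (l + 1) = 0 := by linear_combination h'
      rcases mul_eq_zero.1 hfac with h''|h''
      · have hl1 : l = 1 := by omega
        subst hl1; exact absurd ⟨by norm_num, rfl⟩ hx1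
      · have hl1 : l = -1 := by omega
        subst hl1; exact absurd ⟨by norm_num, rfl⟩ hx2
    · have h6 : l^6 ≥ 4*l^4 := by
        nlinarith [mul_nonneg (sq_nonneg (l^2)) (by linarith : (0:ℤ) ≤ l^2 - 4)]
      have h4 : l^4 ≥ 16 := by nlinarith
      have : l^4 - l^2 - (-l^3)^2 ≤ -2 := by nlinarith
      nlinarith [this]
  · -- k = 1 - l³, so l ≠ 1
    have hkv : k = 1 - l^3 := by omega
    have hlne : l ≠ 1 := by
      intro h'; rw [h'] at hkv; norm_num at hkv; omega
    subst hkv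
    have key : l^4 - l^2 - (1 - l^3)^2 ≤ -2 := by
      rcases (by omega : l ≤ -1 ∨ l ≥ 2) with h'|h'
      · have e1 : l^6 - l^4 ≥ 0 := by
          nlinarith [mul_nonneg (sq_nonneg (l^2)) (by linarith : (0:ℤ) ≤ l^2 - 1)]
        have e2 : -2*l^3 ≥ 2 := by nlinarith
        nlinarith [e1, e2]
      · have a1 : l^2 ≥ 4 := by nlinarith
        have a2 : l^4 ≥ 4*l^2 := by nlinarith [mul_nonneg (sq_nonneg l) (by linarith : (0:ℤ) ≤ l^2 - 4)]
        have a3 : l^6 ≥ 4*l^4 := by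
          nlinarith [mul_nonneg (sq_nonneg (l^2)) (by linarith : (0:ℤ) ≤ l^2 - 4)]
        have a4 : l^4 ≥ 2*l^3 := by
          nlinarith [mul_nonneg (by nlinarith : (0:ℤ) ≤ l^3) (by linarith : (0:ℤ) ≤ l - 2)]
        nlinarith [a1, a2, a3, a4]
    nlinarith [key]
  · -- k = -1 - l³, so l ≠ -1
    have hkv : k = -1 - l^3 := by omega
    have hlne : l ≠ -1 := by
      intro h'; rw [h'] at hkv; norm_num at hkv; omega
    subst hkv
    have key : l^4 - l^2 - (-1 - l^3)^2 ≤ -2 := by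
      rcases (by omega : l ≥ 1 ∨ l ≤ -2) with h'|h'
      · have e1 : l^6 - l^4 ≥ 0 := by
          nlinarith [mul_nonneg (sq_nonneg (l^2)) (by linarith : (0:ℤ) ≤ l^2 - 1)]
        have e2 : 2*l^3 ≥ 2 := by nlinarith
        nlinarith [e1, e2]
      · have a1 : l^2 ≥ 4 := by nlinarith
        have a3 : l^6 ≥ 4*l^4 := by
          nlinarith [mul_nonneg (sq_nonneg (l^2)) (by linarith : (0:ℤ) ≤ l^2 - 4)]
        have a5 : l^3 * (3*l + 2) ≥ 0 := by
          nlinarith [mul_nonneg (by nlinarith : (0:ℤ) ≤ -l^3) (by linarith : (0:ℤ) ≤ -(3*l + 2))]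
        nlinarith [a1, a3, a5]
    nlinarith [key]

/-! ### Two close windows give a contradiction -/

private lemma close_centers {z C D : ℂ} (h1 : ‖z - C‖ ≤ 9/10)
    (h2 : ‖z - D‖ ≤ 9/10) : Complex.normSq (C - D) < 4 := by
  have htri : ‖C - D‖ ≤ ‖z - C‖ + ‖z - D‖ := by
    have := norm_sub_le_norm_sub_add_norm_sub C z D
    rwa [norm_sub_rev C z] at this
  have : ‖C - D‖ ≤ 9/5 := by linarith
  have hnn := norm_nonneg (C - D)
  calc Complex.normSq (C - D) = (‖C - D‖)^2 := (Complex.sq_norm _).symm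
    _ ≤ (9/5)^2 := by nlinarith
    _ < 4 := by norm_num

/-! ### No common root for distinct indices -/

private lemma no_common_root (k l : ℤ) (hk : k ≠ 0) (hl : l ≠ 0) (z : ℂ)
    (h1 : z^2 + cc k * z + dd k = 0) (h2 : z^2 + cc l * z + dd l = 0) : k = l := by
  by_contra hne
  -- special pairs (1,-1), (-1,1): c₁ = c₋₁ but d₁ ≠ d₋₁
  by_cases hsp1 : k = 1 ∧ l = -1
  · obtain ⟨rfl, rfl⟩ := hsp1
    simp only [cc, dd] at h1 h2
    have h2I : (2:ℂ) * Complex.I = 0 := by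
      push_cast at h1 h2 ⊢
      linear_combination h1 - h2
    simp [Complex.I_ne_zero] at h2I
  by_cases hsp2 : k = -1 ∧ l = 1
  · obtain ⟨rfl, rfl⟩ := hsp2
    simp only [cc, dd] at h1 h2
    have h2I : (2:ℂ) * Complex.I = 0 := by
      push_cast at h1 h2 ⊢
      linear_combination h2 - h1
    simp [Complex.I_ne_zero] at h2I
  -- main case: windows
  have w1 := window k hk z h1
  have w2 := window l hl z h2
  rcases w1 with hw1|hw1 <;> rcases w2 with hw2|hw2
  · -- a_k vs a_l
    have hclose := close_centers hw1 hw2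
    have hdiff : aC k - aC l
        = (((l^2 - k^2 : ℤ) : ℝ) : ℂ) + (((k - l : ℤ) : ℝ) : ℂ) * Complex.I := by
      simp only [aC]; push_cast; ring
    rw [hdiff, Complex.normSq_add_mul_I] at hclose
    have hge : (4:ℝ) ≤ ((l^2 - k^2 : ℤ) : ℝ)^2 + ((k - l : ℤ) : ℝ)^2 := by
      exact_mod_cast dist_aa k l hk hl hne
    linarith
  · -- a_k vs b_l
    have hclose := close_centers hw1 hw2
    have hdiff : aC k - bC l
        = (((l^4 - l^2 - k^2 : ℤ) : ℝ) : ℂ) + (((k + l^3 : ℤ) : ℝ) : ℂ) * Complex.I := by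
      simp only [aC, bC]; push_cast; ring
    rw [hdiff, Complex.normSq_add_mul_I] at hclose
    have hge : (4:ℝ) ≤ ((l^4 - l^2 - k^2 : ℤ) : ℝ)^2 + ((k + l^3 : ℤ) : ℝ)^2 := by
      exact_mod_cast dist_ab k l hk hl
        (fun h => hsp2 ⟨h.1, h.2⟩) (fun h => hsp1 ⟨h.1, h.2⟩)
    linarith
  · -- b_k vs a_l
    have hclose := close_centers hw1 hw2
    have hdiff : bC k - aC l
        = (((k^4 - k^2 - l^2 : ℤ) : ℝ) : ℂ) * (-1) + (((l + k^3 : ℤ) : ℝ) : ℂ) * (-1) * Complex.I := by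
      simp only [aC, bC]; push_cast; ring
    have hdiff' : bC k - aC l
        = (((-(k^4 - k^2 - l^2) : ℤ) : ℝ) : ℂ) + (((-(l + k^3) : ℤ) : ℝ) : ℂ) * Complex.I := by
      rw [hdiff]; push_cast; ring
    rw [hdiff', Complex.normSq_add_mul_I] at hclose
    have hge' : (4:ℤ) ≤ (k^4 - k^2 - l^2)^2 + (l + k^3)^2 :=
      dist_ab l k hl hk (fun h => hsp1 ⟨h.2, h.1⟩) (fun h => hsp2 ⟨h.2, h.1⟩)
    have hge : (4:ℝ) ≤ ((-(k^4 - k^2 - l^2) : ℤ) : ℝ)^2 + ((-(l + k^3) : ℤ) : ℝ)^2 := by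
      have : (4:ℤ) ≤ (-(k^4 - k^2 - l^2))^2 + (-(l + k^3))^2 := by nlinarith [hge']
      exact_mod_cast this
    linarith
  · -- b_k vs b_l
    have hclose := close_centers hw1 hw2
    have hdiff : bC k - bC l
        = (((l^4 - l^2 - (k^4 - k^2) : ℤ) : ℝ) : ℂ) + (((l^3 - k^3 : ℤ) : ℝ) : ℂ) * Complex.I := by
      simp only [bC]; push_cast; ring
    rw [hdiff, Complex.normSq_add_mul_I] at hclose
    have hge : (4:ℝ) ≤ ((l^4 - l^2 - (k^4 - k^2) : ℤ) : ℝ)^2 + ((l^3 - k^3 : ℤ) : ℝ)^2 := by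
      exact_mod_cast dist_bb k l hk hl hne
    linarith

/-- all the eigenvalues `λ_k^±`, `k ≠ 0`, are nonzero and pairwise
distinct (distinct indices or distinct signs give distinct eigenvalues). -/
theorem eigenvalues_nonzero_and_distinct :
    (∀ k : ℤ, k ≠ 0 → lamP k ≠ 0 ∧ lamM k ≠ 0) ∧
    (∀ k l : ℤ, k ≠ 0 → l ≠ 0 →
      (lamP k = lamP l → k = l) ∧
      (lamM k = lamM l → k = l) ∧
      lamP k ≠ lamM l) := by
  have hnz : ∀ k : ℤ, k ≠ 0 → lamP k ≠ 0 ∧ lamM k ≠ 0 := by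
    intro k hk
    have hprod := prodPM k hk
    have hdd := dd_ne k hk
    constructor
    · intro h; rw [h, zero_mul] at hprod; exact hdd hprod.symm
    · intro h; rw [h, mul_zero] at hprod; exact hdd hprod.symm
  refine ⟨hnz, ?_⟩
  intro k l hk hl
  refine ⟨?_, ?_, ?_⟩
  · intro h
    exact no_common_root k l hk hl (lamP k) (quadP k hk) (h ▸ quadP l hl)
  · intro h
    exact no_common_root k l hk hl (lamM k) (quadM k hk) (h ▸ quadM l hl)
  · intro h
    have hkl : k = l := no_common_root k l hk hl (lamP k) (quadP k hk) (h ▸ quadM l hl)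
    subst hkl
    exact lamP_ne_lamM_self k hk h
end
end

section
/- Let ρ ∈ (0, 1) be a quadratic irrational, i.e. ρ is irrational and is a root of a polynomial of degree 2 with integer coefficients. Then there exists a constant C > 0 such that for every k ∈ ℤ \ {0}: sin²(k ρ π / 2) ≥ C / k². -/
open Real

open Polynomial in
/-- Liouville bound for a quadratic irrational: `|ρ - p/q| ≥ 1/(A q²)`. -/
lemma quad_irrational_bound (ρ : ℝ) (hirr : Irrational ρ)
    (hquad : ∃ a b c : ℤ, a ≠ 0 ∧ (a:ℝ) * ρ^2 + (b:ℝ) * ρ + (c:ℝ) = 0) :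
    ∃ A : ℝ, 0 < A ∧ ∀ p q : ℤ, q ≠ 0 → 1 / (A * (q:ℝ)^2) ≤ |ρ - (p:ℝ)/(q:ℝ)| := by
  obtain ⟨a, b, c, ha, hroot⟩ := hquad
  set f : ℤ[X] := C a * X ^ 2 + C b * X + C c with hf
  have hdeg : f.natDegree = 2 := Polynomial.natDegree_quadratic ha
  have hf0 : f ≠ 0 := fun h => by simp [h] at hdeg
  have heval : eval ρ (map (algebraMap ℤ ℝ) f) = 0 := by
    simp only [hf, Polynomial.map_add, Polynomial.map_mul, Polynomial.map_pow,
      Polynomial.map_C, Polynomial.map_X, eval_add, eval_mul, eval_pow, eval_C, eval_X]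
    simpa using hroot
  obtain ⟨A, hA, hAle⟩ := Liouville.exists_pos_real_of_irrational_root hirr hf0 heval
  refine ⟨A, hA, fun p q hq => ?_⟩
  set n : ℕ := q.natAbs with hn
  have hn1 : 1 ≤ n := Nat.one_le_iff_ne_zero.mpr (Int.natAbs_ne_zero.mpr hq)
  set p' : ℤ := p * q.sign with hp'
  have hq0 : (q:ℝ) ≠ 0 := Int.cast_ne_zero.mpr hq
  have hqn : ((n:ℤ):ℝ) = |(q:ℝ)| := by
    rw [hn]; push_cast [Nat.cast_natAbs]; simp
  have hfrac : (p':ℝ) / (n:ℝ) = (p:ℝ) / (q:ℝ) := by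
    rcases lt_or_gt_of_ne hq with h | h
    · have hs : q.sign = -1 := Int.sign_eq_neg_one_of_neg h
      have hq' : ((n:ℤ):ℝ) = -(q:ℝ) := by
        rw [hqn, abs_of_neg]; exact_mod_cast h
      push_cast at hq'
      rw [hp']; push_cast [hs]
      rw [hq', mul_neg_one, neg_div_neg_eq]
    · have hs : q.sign = 1 := Int.sign_eq_one_of_pos h
      have hq' : ((n:ℤ):ℝ) = (q:ℝ) := by
        rw [hqn, abs_of_pos]; exact_mod_cast h
      push_cast at hq'
      rw [hp']; push_cast [hs]
      rw [hq', mul_one]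
  have key := hAle p' (n - 1)
  rw [hdeg] at key
  have hcast : ((n - 1 : ℕ) : ℝ) + 1 = (n:ℝ) := by
    push_cast [Nat.cast_sub hn1]; ring
  rw [hcast, hfrac] at key
  have hq2 : ((n:ℝ))^2 = (q:ℝ)^2 := by
    have := hqn; push_cast at this; rw [this, sq_abs]
  rw [hq2] at key
  have hqpos : (0:ℝ) < (q:ℝ)^2 := by positivity
  rw [div_le_iff₀ (by positivity)]
  calc 1 ≤ (q:ℝ)^2 * (|ρ - (p:ℝ)/(q:ℝ)| * A) := key
    _ = |ρ - (p:ℝ)/(q:ℝ)| * (A * (q:ℝ)^2) := by ring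

/-- if `ρ ∈ (0,1)` is a quadratic irrational, then `sin²(kρπ/2) ≥ C/k²`
for all nonzero integers `k`. -/
theorem sin_sq_lower_bound_of_quadratic_irrational
    (ρ : ℝ) (hρ : ρ ∈ Set.Ioo (0:ℝ) 1) (hirr : Irrational ρ)
    (hquad : ∃ a b c : ℤ, a ≠ 0 ∧ (a:ℝ) * ρ^2 + (b:ℝ) * ρ + (c:ℝ) = 0) :
    ∃ C : ℝ, 0 < C ∧ ∀ k : ℤ, k ≠ 0 →
      C / (k:ℝ)^2 ≤ Real.sin ((k:ℝ) * ρ * π / 2)^2 := by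
  obtain ⟨A, hA, hbound⟩ := quad_irrational_bound ρ hirr hquad
  refine ⟨1 / A^2, by positivity, fun k hk => ?_⟩
  have hk0 : (k:ℝ) ≠ 0 := Int.cast_ne_zero.mpr hk
  have hk2 : (0:ℝ) < (k:ℝ)^2 := by positivity
  set x : ℝ := (k:ℝ) * ρ / 2 with hx
  set m : ℤ := round x with hm
  -- |x - m| ≥ 1/(2A|k|) : since 2(x - m) = kρ - 2m = k(ρ - 2m/k)
  have hdist : 1 / (A * (k:ℝ)^2) ≤ |ρ - ((2*m : ℤ):ℝ)/(k:ℝ)| := hbound (2*m) k hk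
  have h2 : |x - (m:ℝ)| = |(k:ℝ)| * |ρ - ((2*m : ℤ):ℝ)/(k:ℝ)| / 2 := by
    rw [← abs_of_pos (show (0:ℝ) < 2 by norm_num), ← abs_mul, ← abs_div]
    congr 1
    field_simp [hx]
    push_cast
    ring
  have habs : 1 / (2 * A * |(k:ℝ)|) ≤ |x - (m:ℝ)| := by
    rw [h2]
    have hkabs : (0:ℝ) < |(k:ℝ)| := abs_pos.mpr hk0
    rw [div_le_div_iff₀ (by positivity) (by norm_num)]
    calc 1 * 2 = 2 * A * (k:ℝ)^2 * (1 / (A * (k:ℝ)^2)) := by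
          field_simp
      _ ≤ 2 * A * (k:ℝ)^2 * |ρ - ((2*m : ℤ):ℝ)/(k:ℝ)| := by
          apply mul_le_mul_of_nonneg_left hdist (by positivity)
      _ = |(k:ℝ)| * |ρ - ((2*m : ℤ):ℝ)/(k:ℝ)| * (2 * A * |(k:ℝ)|) := by
          rw [← sq_abs (k:ℝ)]; ring
  have hhalf : |x - (m:ℝ)| ≤ 1/2 := abs_sub_round x
  -- sin(πx)² = sin(π(x-m))²
  have hsin : Real.sin ((k:ℝ) * ρ * π / 2) ^ 2 = Real.sin (π * (x - m)) ^ 2 := by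
    have : (k:ℝ) * ρ * π / 2 = π * (x - m) + m * π := by rw [hx]; ring
    rw [this, Real.sin_add_int_mul_pi, mul_pow]
    have h1 : ((-1:ℝ) ^ m) ^ 2 = 1 := by
      rw [show ((-1:ℝ) ^ m) ^ 2 = (-1:ℝ) ^ (2 * m) from by
        rw [two_mul, zpow_add₀ (by norm_num : (-1:ℝ) ≠ 0), sq]]
      exact Even.neg_one_zpow ⟨m, two_mul m⟩
    rw [h1, one_mul]
  rw [hsin]
  have hpibd : |π * (x - m)| ≤ π / 2 := by
    rw [abs_mul, abs_of_pos Real.pi_pos]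
    calc π * |x - (m:ℝ)| ≤ π * (1/2) := by
          exact mul_le_mul_of_nonneg_left hhalf Real.pi_pos.le
      _ = π / 2 := by ring
  have hsinlb : 2 / π * |π * (x - m)| ≤ |Real.sin (π * (x - m))| :=
    Real.mul_abs_le_abs_sin hpibd
  have h2x : 2 / π * |π * (x - m)| = 2 * |x - (m:ℝ)| := by
    have hπ : π ≠ 0 := Real.pi_ne_zero
    rw [abs_mul, abs_of_pos Real.pi_pos]
    field_simp
  rw [h2x] at hsinlb
  have hfinal : 1 / (A * |(k:ℝ)|) ≤ |Real.sin (π * (x - m))| := by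
    refine le_trans ?_ hsinlb
    rw [show (1:ℝ) / (A * |(k:ℝ)|) = 2 * (1 / (2 * A * |(k:ℝ)|)) by field_simp]
    linarith [habs]
  calc 1 / A^2 / (k:ℝ)^2 = (1 / (A * |(k:ℝ)|)) ^ 2 := by
        rw [← sq_abs (k:ℝ)]; field_simp
    _ ≤ |Real.sin (π * (x - m))| ^ 2 := pow_le_pow_left₀ (by positivity) hfinal 2
    _ = Real.sin (π * (x - m)) ^ 2 := sq_abs _
end

section
/- There exist constants 0 < c ≤ C such that for every x ∈ ℝ: c (1 + x²)^{1/8} ≤ ∫_{−∞}^{∞} |s|^{1/4} / (1 + (x − s)²) ds ≤ C (1 + x²)^{1/8}. In particular the integral ∫_{−∞}^{∞} |s|^{1/4} / (1 + (x − s)²) ds is finite for every x ∈ ℝ. -/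
open Real MeasureTheory

private lemma rpow_quarter_subadd {a b : ℝ} (ha : 0 ≤ a) (hb : 0 ≤ b) :
    (a + b) ^ ((1:ℝ)/4) ≤ a ^ ((1:ℝ)/4) + b ^ ((1:ℝ)/4) := by
  have h := NNReal.rpow_add_le_add_rpow a.toNNReal b.toNNReal
      (by norm_num : (0:ℝ) ≤ 1/4) (by norm_num : (1:ℝ)/4 ≤ 1)
  have h' := NNReal.coe_le_coe.2 h
  simpa [NNReal.coe_rpow, Real.coe_toNNReal a ha, Real.coe_toNNReal b hb,
    Real.coe_toNNReal _ (add_nonneg ha hb)] using h'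

private lemma aux_pointwise (t : ℝ) :
    |t| ^ ((1:ℝ)/4) / (1 + t^2) ≤ 2 * (1 + |t|) ^ (-(7/4 : ℝ)) := by
  have hu : (0:ℝ) < 1 + |t| := by positivity
  have h2 : (1 + |t|) ^ (-(7/4:ℝ)) * (1 + |t|)^2 = (1 + |t|) ^ ((1:ℝ)/4) := by
    rw [← Real.rpow_natCast (1 + |t|) 2, ← Real.rpow_add hu]; norm_num
  have key : (1 + |t|)^2 ≤ 2 * (1 + t^2) := by
    nlinarith [sq_abs t, sq_nonneg (|t| - 1)]
  have h1 : |t| ^ ((1:ℝ)/4) ≤ (1 + |t|) ^ ((1:ℝ)/4) :=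
    Real.rpow_le_rpow (abs_nonneg t) (by linarith [abs_nonneg t]) (by norm_num)
  rw [div_le_iff₀ (by positivity : (0:ℝ) < 1 + t^2)]
  calc |t| ^ ((1:ℝ)/4) ≤ (1 + |t|) ^ ((1:ℝ)/4) := h1
    _ = (1 + |t|) ^ (-(7/4:ℝ)) * (1 + |t|)^2 := h2.symm
    _ ≤ (1 + |t|) ^ (-(7/4:ℝ)) * (2 * (1 + t^2)) :=
        mul_le_mul_of_nonneg_left key (Real.rpow_nonneg hu.le _)
    _ = 2 * (1 + |t|) ^ (-(7/4:ℝ)) * (1 + t^2) := by ring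

private lemma aux_meas (x : ℝ) :
    AEStronglyMeasurable (fun s : ℝ => |s| ^ ((1:ℝ)/4) / (1 + (x - s)^2)) volume := by
  apply Measurable.aestronglyMeasurable
  fun_prop

private lemma aux_integrable : Integrable (fun t : ℝ => |t| ^ ((1:ℝ)/4) / (1 + t^2)) := by
  have hint : Integrable (fun t : ℝ => 2 * (1 + ‖t‖) ^ (-(7/4 : ℝ))) :=
    (integrable_one_add_norm (E := ℝ) (by norm_num)).const_mul 2
  refine hint.mono' ?_ ?_
  · simpa using aux_meas 0
  · filter_upwards with t
    have hnn : (0:ℝ) ≤ |t| ^ ((1:ℝ)/4) / (1 + t^2) := by positivity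
    rw [Real.norm_eq_abs, abs_of_nonneg hnn, Real.norm_eq_abs]
    exact aux_pointwise t

private lemma aux_base (x : ℝ) :
    Integrable (fun t : ℝ => |x| ^ ((1:ℝ)/4) * (1 + t^2)⁻¹ + |t| ^ ((1:ℝ)/4) / (1 + t^2)) :=
  (integrable_inv_one_add_sq.const_mul _).add aux_integrable

private lemma aux_bound (x s : ℝ) :
    |s| ^ ((1:ℝ)/4) / (1 + (x - s)^2) ≤
      |x| ^ ((1:ℝ)/4) * (1 + (x - s)^2)⁻¹ + |x - s| ^ ((1:ℝ)/4) / (1 + (x - s)^2) := by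
  have hd : (0:ℝ) < 1 + (x - s)^2 := by positivity
  have hb : |s| ^ ((1:ℝ)/4) ≤ |x| ^ ((1:ℝ)/4) + |x - s| ^ ((1:ℝ)/4) := by
    have h0 : |s| ≤ |x| + |x - s| := by
      have : s = x - (x - s) := by ring
      calc |s| = |x - (x - s)| := by rw [← this]
        _ ≤ |x| + |x - s| := abs_sub _ _
    calc |s| ^ ((1:ℝ)/4) ≤ (|x| + |x - s|) ^ ((1:ℝ)/4) :=
          Real.rpow_le_rpow (abs_nonneg s) h0 (by norm_num)
      _ ≤ _ := rpow_quarter_subadd (abs_nonneg _) (abs_nonneg _)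
  have hrw : |x| ^ ((1:ℝ)/4) * (1 + (x - s)^2)⁻¹ + |x - s| ^ ((1:ℝ)/4) / (1 + (x - s)^2)
      = (|x| ^ ((1:ℝ)/4) + |x - s| ^ ((1:ℝ)/4)) / (1 + (x - s)^2) := by
    field_simp
  rw [hrw]
  gcongr

private lemma aux_integrable_shift (x : ℝ) :
    Integrable (fun s : ℝ => |s| ^ ((1:ℝ)/4) / (1 + (x - s)^2)) := by
  have h1 : Integrable (fun s : ℝ =>
      |x| ^ ((1:ℝ)/4) * (1 + (x - s)^2)⁻¹ + |x - s| ^ ((1:ℝ)/4) / (1 + (x - s)^2)) :=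
    (aux_base x).comp_sub_left x
  refine h1.mono' (aux_meas x) ?_
  filter_upwards with s
  have hnn : (0:ℝ) ≤ |s| ^ ((1:ℝ)/4) / (1 + (x - s)^2) := by positivity
  rw [Real.norm_eq_abs, abs_of_nonneg hnn]
  exact aux_bound x s

noncomputable def Kc : ℝ := ∫ t : ℝ, |t| ^ ((1:ℝ)/4) / (1 + t^2)

private lemma Kc_nonneg : 0 ≤ Kc :=
  integral_nonneg fun t => by positivity

private lemma aux_upper (x : ℝ) :
    (∫ s : ℝ, |s| ^ ((1:ℝ)/4) / (1 + (x - s)^2)) ≤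
      (π + Kc) * (1 + x^2) ^ ((1:ℝ)/8) := by
  have h1 : Integrable (fun s : ℝ =>
      |x| ^ ((1:ℝ)/4) * (1 + (x - s)^2)⁻¹ + |x - s| ^ ((1:ℝ)/4) / (1 + (x - s)^2)) :=
    (aux_base x).comp_sub_left x
  have step1 : (∫ s : ℝ, |s| ^ ((1:ℝ)/4) / (1 + (x - s)^2)) ≤
      ∫ s : ℝ, (|x| ^ ((1:ℝ)/4) * (1 + (x - s)^2)⁻¹ + |x - s| ^ ((1:ℝ)/4) / (1 + (x - s)^2)) :=
    integral_mono (aux_integrable_shift x) h1 (fun s => aux_bound x s)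
  have step2 : (∫ s : ℝ, (|x| ^ ((1:ℝ)/4) * (1 + (x - s)^2)⁻¹
        + |x - s| ^ ((1:ℝ)/4) / (1 + (x - s)^2)))
      = ∫ t : ℝ, (|x| ^ ((1:ℝ)/4) * (1 + t^2)⁻¹ + |t| ^ ((1:ℝ)/4) / (1 + t^2)) :=
    integral_sub_left_eq_self
      (fun t : ℝ => |x| ^ ((1:ℝ)/4) * (1 + t^2)⁻¹ + |t| ^ ((1:ℝ)/4) / (1 + t^2)) volume x
  have step3 : (∫ t : ℝ, (|x| ^ ((1:ℝ)/4) * (1 + t^2)⁻¹ + |t| ^ ((1:ℝ)/4) / (1 + t^2)))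
      = |x| ^ ((1:ℝ)/4) * π + Kc := by
    rw [integral_add (integrable_inv_one_add_sq.const_mul _) aux_integrable,
      integral_const_mul, integral_univ_inv_one_add_sq]
    rfl
  have e1 : |x| ^ ((1:ℝ)/4) ≤ (1 + x^2) ^ ((1:ℝ)/8) := by
    have h : (x^2) ^ ((1:ℝ)/8) = |x| ^ ((1:ℝ)/4) := by
      rw [← sq_abs, ← Real.rpow_natCast |x| 2, ← Real.rpow_mul (abs_nonneg x)]
      norm_num
    rw [← h]
    exact Real.rpow_le_rpow (by positivity) (by linarith) (by norm_num)
  have e2 : (1:ℝ) ≤ (1 + x^2) ^ ((1:ℝ)/8) := by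
    calc (1:ℝ) = (1:ℝ) ^ ((1:ℝ)/8) := (Real.one_rpow _).symm
      _ ≤ _ := Real.rpow_le_rpow (by norm_num) (by nlinarith [sq_nonneg x]) (by norm_num)
  have hπ := Real.pi_pos
  have hK := Kc_nonneg
  have m1 : |x| ^ ((1:ℝ)/4) * π ≤ (1 + x^2) ^ ((1:ℝ)/8) * π :=
    mul_le_mul_of_nonneg_right e1 hπ.le
  have m2 : Kc ≤ Kc * (1 + x^2) ^ ((1:ℝ)/8) := le_mul_of_one_le_right hK e2
  calc (∫ s : ℝ, |s| ^ ((1:ℝ)/4) / (1 + (x - s)^2))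
      ≤ |x| ^ ((1:ℝ)/4) * π + Kc := by rw [← step3, ← step2]; exact step1
    _ ≤ (π + Kc) * (1 + x^2) ^ ((1:ℝ)/8) := by nlinarith

private lemma aux_lower (x : ℝ) (hx : 0 ≤ x) :
    (1/5 : ℝ) * (1 + x^2) ^ ((1:ℝ)/8) ≤ ∫ s : ℝ, |s| ^ ((1:ℝ)/4) / (1 + (x - s)^2) := by
  have hA : MeasurableSet (Set.Icc (x+1) (x+2)) := measurableSet_Icc
  have hvol : volume (Set.Icc (x+1) (x+2)) = 1 := by
    rw [Real.volume_Icc]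
    norm_num
  have hconst : ∀ s ∈ Set.Icc (x+1) (x+2),
      (x+1) ^ ((1:ℝ)/4) / 5 ≤ |s| ^ ((1:ℝ)/4) / (1 + (x - s)^2) := by
    intro s hs
    obtain ⟨hs1, hs2⟩ := hs
    have hnum : (x+1) ^ ((1:ℝ)/4) ≤ |s| ^ ((1:ℝ)/4) := by
      apply Real.rpow_le_rpow (by linarith) ?_ (by norm_num)
      calc x + 1 ≤ s := hs1
        _ ≤ |s| := le_abs_self s
    have hden : 1 + (x - s)^2 ≤ 5 := by nlinarith
    exact div_le_div₀ (by positivity) hnum (by positivity) hden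
  have key := setIntegral_ge_of_const_le hA (by rw [hvol]; exact ENNReal.one_ne_top)
      hconst ((aux_integrable_shift x).integrableOn)
  rw [measureReal_def, hvol] at key
  simp only [ENNReal.toReal_one, one_smul] at key
  have step2 : (∫ s in Set.Icc (x+1) (x+2), |s| ^ ((1:ℝ)/4) / (1 + (x - s)^2))
      ≤ ∫ s : ℝ, |s| ^ ((1:ℝ)/4) / (1 + (x - s)^2) :=
    setIntegral_le_integral (aux_integrable_shift x)
      (Filter.Eventually.of_forall fun s => by positivity)
  have e3 : (1 + x^2) ^ ((1:ℝ)/8) ≤ (x+1) ^ ((1:ℝ)/4) := by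
    have h : ((x+1)^2) ^ ((1:ℝ)/8) = (x+1) ^ ((1:ℝ)/4) := by
      rw [← Real.rpow_natCast (x+1) 2, ← Real.rpow_mul (by linarith)]
      norm_num
    rw [← h]
    exact Real.rpow_le_rpow (by positivity) (by nlinarith) (by norm_num)
  linarith

/-- two-sided bound
`c (1+x²)^{1/8} ≤ ∫_ℝ |s|^{1/4}/(1+(x−s)²) ds ≤ C (1+x²)^{1/8}`, the integral being
finite for every real `x`. -/
theorem integral_rpow_quarter_bounds :
    ∃ c C : ℝ, 0 < c ∧ c ≤ C ∧ ∀ x : ℝ,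
      Integrable (fun s : ℝ => |s| ^ ((1:ℝ)/4) / (1 + (x - s)^2)) ∧
      c * (1 + x^2) ^ ((1:ℝ)/8) ≤ ∫ s : ℝ, |s| ^ ((1:ℝ)/4) / (1 + (x - s)^2) ∧
      (∫ s : ℝ, |s| ^ ((1:ℝ)/4) / (1 + (x - s)^2)) ≤ C * (1 + x^2) ^ ((1:ℝ)/8) := by
  refine ⟨1/5, π + Kc, by norm_num, by linarith [Real.pi_gt_three, Kc_nonneg], fun x => ?_⟩
  refine ⟨aux_integrable_shift x, ?_⟩
  rcases le_or_gt 0 x with hx | hx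
  · exact ⟨aux_lower x hx, aux_upper x⟩
  · have hflip : (∫ s : ℝ, |s| ^ ((1:ℝ)/4) / (1 + (x - s)^2))
        = ∫ s : ℝ, |s| ^ ((1:ℝ)/4) / (1 + ((-x) - s)^2) := by
      rw [← integral_neg_eq_self (fun s : ℝ => |s| ^ ((1:ℝ)/4) / (1 + ((-x) - s)^2)) volume]
      congr 1
      funext s
      rw [abs_neg, show -x - -s = -(x - s) by ring, neg_sq]
    have hx2 : 1 + x^2 = 1 + (-x)^2 := by ring
    rw [hflip, hx2]
    exact ⟨aux_lower (-x) (by linarith), aux_upper (-x)⟩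
end
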